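/- Let k ∈ (−π, −π/2) with k ≠ −3π/4 and set ηⱼ = (2j−1)k. Then for all x ∈ ℝ and all t ∈ [0, 1), as L → ∞ over the positive integers: if α > 1/2 then Σ_{j=1}^{⌊Lt⌋} sin⁴(x − ηⱼ)/(L − j)^{2α} → 0, Σ_{j=1}^{⌊Lt⌋} cos⁴(x − ηⱼ)/(L − j)^{2α} → 0, and Σ_{j=1}^{⌊Lt⌋} sin²(x − ηⱼ) cos²(x − ηⱼ)/(L − j)^{2α} → 0; if α = 1/2 then Σ_{j=1}^{⌊Lt⌋} sin⁴(x − ηⱼ)/(L − j) → −(3/8) log(1 − t), Σ_{j=1}^{⌊Lt⌋} cos⁴(x − ηⱼ)/(L − j) → −(3/8) log(1 − t), and Σ_{j=1}^{⌊Lt⌋} sin²(x − ηⱼ) cos²(x − ηⱼ)/(L − j) → −(1/8) log(1 − t); and for all α ≥ 1/2, Σ_{j=1}^{⌊Lt⌋} cos³(x − ηⱼ) sin(x − ηⱼ)/(L − j)^{2α} → 0. -/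

import Mathlib

open Filter Real

section Helpers
open Finset

private lemma abel_id (c w : ℕ → ℝ) (N : ℕ) :
    ∑ j ∈ Finset.Icc 1 N, c j * w j =
      (∑ j ∈ Finset.Icc 1 N, c j) * w N
        - ∑ j ∈ Finset.Ico 1 N, (∑ i ∈ Finset.Icc 1 j, c i) * (w (j + 1) - w j) := by
  induction N with
  | zero => simp
  | succ N ih =>
    rcases Nat.eq_zero_or_pos N with h | h
    · subst h; simp
    · rw [Finset.sum_Icc_succ_top (by omega), Finset.sum_Icc_succ_top (by omega),
        Finset.sum_Ico_succ_top (by omega), ih]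
      ring

private lemma abel_bound (c w : ℕ → ℝ) (M : ℝ) (hM : ∀ m, |∑ j ∈ Finset.Icc 1 m, c j| ≤ M)
    (N : ℕ) (hw : ∀ i, i ≤ N → 0 ≤ w i)
    (hmono : ∀ i, 1 ≤ i → i < N → w i ≤ w (i + 1)) :
    |∑ j ∈ Finset.Icc 1 N, c j * w j| ≤ 2 * M * w N := by
  have hM0 : 0 ≤ M := le_trans (abs_nonneg _) (hM 0)
  rcases Nat.eq_zero_or_pos N with h | hN
  · subst h
    simp only [show Finset.Icc 1 0 = (∅ : Finset ℕ) from rfl, Finset.sum_empty, abs_zero]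
    have := hw 0 le_rfl
    positivity
  rw [abel_id]
  have h1 : |(∑ j ∈ Finset.Icc 1 N, c j) * w N| ≤ M * w N := by
    rw [abs_mul, abs_of_nonneg (hw N le_rfl)]
    exact mul_le_mul_of_nonneg_right (hM N) (hw N le_rfl)
  have h2 : |∑ j ∈ Finset.Ico 1 N, (∑ i ∈ Finset.Icc 1 j, c i) * (w (j + 1) - w j)|
      ≤ ∑ j ∈ Finset.Ico 1 N, M * (w (j + 1) - w j) := by
    refine (Finset.abs_sum_le_sum_abs _ _).trans (Finset.sum_le_sum ?_)
    intro j hj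
    simp only [Finset.mem_Ico] at hj
    have hwj : 0 ≤ w (j + 1) - w j := sub_nonneg.2 (hmono j hj.1 hj.2)
    rw [abs_mul, abs_of_nonneg hwj]
    exact mul_le_mul_of_nonneg_right (hM j) hwj
  have h3 : ∑ j ∈ Finset.Ico 1 N, M * (w (j + 1) - w j) = M * (w N - w 1) := by
    rw [← Finset.mul_sum]
    congr 1
    rw [Finset.sum_Ico_eq_sum_range]
    have h0 := Finset.sum_range_sub (fun i : ℕ => w (1 + i)) (N - 1)
    calc ∑ i ∈ Finset.range (N - 1), (w (1 + i + 1) - w (1 + i))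
        = ∑ i ∈ Finset.range (N - 1), (w (1 + (i + 1)) - w (1 + i)) := by
          apply Finset.sum_congr rfl; intro i _
          have e : 1 + i + 1 = 1 + (i + 1) := by omega
          rw [e]
      _ = w (1 + (N - 1)) - w (1 + 0) := h0
      _ = w N - w 1 := by
          have e1 : 1 + (N - 1) = N := by omega
          have e2 : 1 + 0 = 1 := by omega
          rw [e1, e2]
  have h4 := abs_sub ((∑ j ∈ Finset.Icc 1 N, c j) * w N)
    (∑ j ∈ Finset.Ico 1 N, (∑ i ∈ Finset.Icc 1 j, c i) * (w (j + 1) - w j))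
  have h5 : 0 ≤ M * w 1 := mul_nonneg hM0 (hw 1 hN)
  rw [h3] at h2
  nlinarith [h1, h2, h4, h5]

private lemma trig_partial_bound (a b : ℝ) (hb : ∀ n : ℤ, b ≠ n * (2 * π)) :
    ∃ M : ℝ, 0 ≤ M ∧ (∀ m : ℕ, |∑ j ∈ Finset.Icc 1 m, Real.cos (a - b * j)| ≤ M) ∧
      (∀ m : ℕ, |∑ j ∈ Finset.Icc 1 m, Real.sin (a - b * j)| ≤ M) := by
  set z : ℂ := Complex.exp (-(b : ℂ) * Complex.I) with hz
  have hzabs : ‖z‖ = 1 := by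
    rw [hz, show (-(b : ℂ)) * Complex.I = ((-b : ℝ) : ℂ) * Complex.I by push_cast; ring]
    exact Complex.norm_exp_ofReal_mul_I _
  have hzne : z ≠ 1 := by
    intro h
    rw [hz, Complex.exp_eq_one_iff] at h
    obtain ⟨n, hn⟩ := h
    apply hb (-n)
    have h1 : (-(b : ℂ)) * Complex.I = ((n : ℂ) * (2 * π)) * Complex.I := by rw [hn]; ring
    have h2 : (-(b : ℂ)) = (n : ℂ) * (2 * π) := mul_right_cancel₀ Complex.I_ne_zero h1
    have h3 : ((b : ℝ) : ℂ) = ((((-n : ℤ) : ℝ) * (2 * π) : ℝ) : ℂ) := by push_cast; linear_combination -h2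
    exact_mod_cast h3
  have habsne : 0 < ‖z - 1‖ := norm_pos_iff.mpr (sub_ne_zero.mpr hzne)
  have key : ∀ m : ℕ, ‖(∑ j ∈ Finset.Icc 1 m,
      Complex.exp (((a - b * j : ℝ) : ℂ) * Complex.I))‖ ≤ 2 / ‖z - 1‖ := by
    intro m
    have hsum : ∑ j ∈ Finset.Icc 1 m, Complex.exp (((a - b * j : ℝ) : ℂ) * Complex.I)
        = Complex.exp ((a : ℂ) * Complex.I) * ∑ j ∈ Finset.Icc 1 m, z ^ j := by
      rw [Finset.mul_sum]
      refine Finset.sum_congr rfl fun j _ => ?_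
      rw [hz, ← Complex.exp_nat_mul, ← Complex.exp_add]
      congr 1; push_cast; ring
    have hgeom : ∑ j ∈ Finset.Icc 1 m, z ^ j = (z ^ (m + 1) - z) / (z - 1) := by
      rw [← Finset.Ico_add_one_right_eq_Icc, Finset.sum_Ico_eq_sub _ (by omega), geom_sum_eq hzne]
      simp only [Finset.range_one, Finset.sum_singleton, pow_zero]
      have hne := sub_ne_zero.mpr hzne
      field_simp
      ring
    rw [hsum, norm_mul, hgeom, norm_div, Complex.norm_exp_ofReal_mul_I, one_mul]
    have hnum : ‖z ^ (m + 1) - z‖ ≤ 2 := by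
      calc ‖z ^ (m + 1) - z‖ ≤ ‖z ^ (m + 1)‖ + ‖z‖ := by
            simpa using norm_sub_le (z ^ (m + 1)) z
        _ = 2 := by rw [norm_pow, hzabs]; norm_num
    gcongr
  refine ⟨2 / ‖z - 1‖, by positivity, fun m => ?_, fun m => ?_⟩
  · have hre : ∑ j ∈ Finset.Icc 1 m, Real.cos (a - b * j)
        = (∑ j ∈ Finset.Icc 1 m, Complex.exp (((a - b * j : ℝ) : ℂ) * Complex.I)).re := by
      rw [Complex.re_sum]
      exact Finset.sum_congr rfl fun j _ => (Complex.exp_ofReal_mul_I_re _).symm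
    rw [hre]
    exact le_trans (Complex.abs_re_le_norm _) (key m)
  · have him : ∑ j ∈ Finset.Icc 1 m, Real.sin (a - b * j)
        = (∑ j ∈ Finset.Icc 1 m, Complex.exp (((a - b * j : ℝ) : ℂ) * Complex.I)).im := by
      rw [Complex.im_sum]
      exact Finset.sum_congr rfl fun j _ => (Complex.exp_ofReal_mul_I_im _).symm
    rw [him]
    exact le_trans (Complex.abs_im_le_norm _) (key m)

private lemma sub_floor_atTop (t : ℝ) (ht0 : 0 ≤ t) (ht1 : t < 1) :
    Tendsto (fun L : ℕ => (L : ℝ) - (⌊(L : ℝ) * t⌋₊ : ℝ)) atTop atTop := by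
  apply tendsto_atTop_mono' atTop (f₁ := fun L : ℕ => (L : ℝ) * (1 - t))
  · filter_upwards with L
    have h := Nat.floor_le (by positivity : (0:ℝ) ≤ (L : ℝ) * t)
    nlinarith
  · have h1 : Tendsto (fun L : ℕ => (L : ℝ)) atTop atTop := tendsto_natCast_atTop_atTop
    exact (h1.atTop_mul_const (by linarith : (0:ℝ) < 1 - t)).congr (fun L => by ring)

private lemma osc_tendsto (c : ℕ → ℝ) (M : ℝ) (hM : ∀ m, |∑ j ∈ Finset.Icc 1 m, c j| ≤ M)
    (p : ℝ) (hp : 0 < p) (t : ℝ) (ht0 : 0 ≤ t) (ht1 : t < 1) :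
    Tendsto (fun L : ℕ => ∑ j ∈ Finset.Icc 1 ⌊(L : ℝ) * t⌋₊, c j / ((L : ℝ) - (j : ℝ)) ^ p)
      atTop (nhds 0) := by
  have hsub := sub_floor_atTop t ht0 ht1
  have hbound : Tendsto (fun L : ℕ =>
      2 * M * ((((L : ℝ) - (⌊(L : ℝ) * t⌋₊ : ℝ)) ^ p)⁻¹)) atTop (nhds 0) := by
    have h1 := ((tendsto_rpow_atTop hp).comp hsub).inv_tendsto_atTop
    have h2 := h1.const_mul (2 * M)
    rw [mul_zero] at h2
    exact h2.congr fun L => by simp [Function.comp]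
  apply squeeze_zero_norm' _ hbound
  filter_upwards [hsub.eventually_ge_atTop 1] with L hL
  set N := ⌊(L : ℝ) * t⌋₊ with hNdef
  have hbase : ∀ i : ℕ, i ≤ N → (1 : ℝ) ≤ (L : ℝ) - (i : ℝ) := by
    intro i hi
    have : (i : ℝ) ≤ (N : ℝ) := Nat.cast_le.2 hi
    linarith
  have hkey := abel_bound c (fun j => (((L : ℝ) - (j : ℝ)) ^ p)⁻¹) M hM N
    (fun i hi => inv_nonneg.mpr (Real.rpow_nonneg (by linarith [hbase i hi]) p))
    (fun i hi1 hi2 => by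
      have hb1 : (1 : ℝ) ≤ (L : ℝ) - ((i + 1 : ℕ) : ℝ) := hbase (i + 1) hi2
      have hle : (L : ℝ) - ((i + 1 : ℕ) : ℝ) ≤ (L : ℝ) - (i : ℝ) := by push_cast; linarith
      exact inv_anti₀ (Real.rpow_pos_of_pos (by linarith) p)
        (Real.rpow_le_rpow (by linarith) hle hp.le))
  rw [Real.norm_eq_abs]
  calc |∑ j ∈ Finset.Icc 1 N, c j / ((L : ℝ) - (j : ℝ)) ^ p|
      = |∑ j ∈ Finset.Icc 1 N, c j * (((L : ℝ) - (j : ℝ)) ^ p)⁻¹| := by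
        exact congrArg abs (Finset.sum_congr rfl fun j _ => div_eq_mul_inv _ _)
    _ ≤ 2 * M * (((L : ℝ) - (N : ℝ)) ^ p)⁻¹ := hkey

private lemma pow_sum_tendsto (p : ℝ) (hp : 1 < p) (t : ℝ) (ht0 : 0 ≤ t) (ht1 : t < 1) :
    Tendsto (fun L : ℕ => ∑ j ∈ Finset.Icc 1 ⌊(L : ℝ) * t⌋₊, 1 / ((L : ℝ) - (j : ℝ)) ^ p)
      atTop (nhds 0) := by
  have hbound : Tendsto (fun L : ℕ => t / (1 - t) ^ p * (L : ℝ) ^ (1 - p)) atTop (nhds 0) := by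
    have h1 : Tendsto (fun y : ℝ => y ^ (1 - p)) atTop (nhds 0) := by
      have := tendsto_rpow_neg_atTop (show (0:ℝ) < p - 1 by linarith)
      exact this.congr fun y => by rw [show -(p - 1) = 1 - p by ring]
    have h2 := (h1.comp (tendsto_natCast_atTop_atTop (R := ℝ))).const_mul (t / (1 - t) ^ p)
    rw [mul_zero] at h2
    exact h2.congr fun L => by simp [Function.comp]
  apply squeeze_zero_norm' _ hbound
  filter_upwards [eventually_ge_atTop 1] with L hL
  set N := ⌊(L : ℝ) * t⌋₊ with hNdef
  have hL1 : (1 : ℝ) ≤ (L : ℝ) := by exact_mod_cast hL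
  have hNle : (N : ℝ) ≤ (L : ℝ) * t := Nat.floor_le (by positivity)
  have h1t : (0 : ℝ) < 1 - t := by linarith
  have hLt0 : (0 : ℝ) < (L : ℝ) * (1 - t) := by nlinarith
  have hterm : ∀ j ∈ Finset.Icc 1 N, 1 / ((L : ℝ) - (j : ℝ)) ^ p ≤ (((L : ℝ) * (1 - t)) ^ p)⁻¹ := by
    intro j hj
    simp only [Finset.mem_Icc] at hj
    have hj2 : ((j : ℝ)) ≤ (N : ℝ) := Nat.cast_le.2 hj.2
    have hb2 : (L : ℝ) * (1 - t) ≤ (L : ℝ) - (j : ℝ) := by nlinarith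
    rw [one_div]
    exact inv_anti₀ (Real.rpow_pos_of_pos hLt0 p)
      (Real.rpow_le_rpow hLt0.le hb2 (by linarith))
  have hpos : ∀ j ∈ Finset.Icc 1 N, 0 ≤ 1 / ((L : ℝ) - (j : ℝ)) ^ p := by
    intro j hj
    simp only [Finset.mem_Icc] at hj
    have hj2 : ((j : ℝ)) ≤ (N : ℝ) := Nat.cast_le.2 hj.2
    have hb2 : (L : ℝ) * (1 - t) ≤ (L : ℝ) - (j : ℝ) := by nlinarith
    exact div_nonneg zero_le_one (Real.rpow_nonneg (by linarith) p)
  have hsum : ∑ j ∈ Finset.Icc 1 N, 1 / ((L : ℝ) - (j : ℝ)) ^ p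
      ≤ (N : ℝ) * (((L : ℝ) * (1 - t)) ^ p)⁻¹ := by
    calc ∑ j ∈ Finset.Icc 1 N, 1 / ((L : ℝ) - (j : ℝ)) ^ p
        ≤ (Finset.Icc 1 N).card • (((L : ℝ) * (1 - t)) ^ p)⁻¹ :=
          Finset.sum_le_card_nsmul _ _ _ hterm
      _ = (N : ℝ) * (((L : ℝ) * (1 - t)) ^ p)⁻¹ := by
          rw [Nat.card_Icc, Nat.add_sub_cancel, nsmul_eq_mul]
  have h2 : (N : ℝ) * (((L : ℝ) * (1 - t)) ^ p)⁻¹ ≤ t / (1 - t) ^ p * (L : ℝ) ^ (1 - p) := by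
    have e : ((L : ℝ) * (1 - t)) ^ p = (L : ℝ) ^ p * (1 - t) ^ p :=
      Real.mul_rpow (by linarith) (by linarith)
    have e2 : (L : ℝ) ^ (1 - p) = (L : ℝ) * ((L : ℝ) ^ p)⁻¹ := by
      rw [show (1 : ℝ) - p = 1 + -p by ring,
        Real.rpow_add (by linarith : (0:ℝ) < (L : ℝ)), Real.rpow_one,
        Real.rpow_neg (by linarith)]
    have hLp : (0 : ℝ) < (L : ℝ) ^ p := Real.rpow_pos_of_pos (by linarith) _
    have h1tp : (0 : ℝ) < (1 - t) ^ p := Real.rpow_pos_of_pos h1t _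
    rw [e, e2, mul_inv]
    calc (N : ℝ) * (((L : ℝ) ^ p)⁻¹ * ((1 - t) ^ p)⁻¹)
        ≤ ((L : ℝ) * t) * (((L : ℝ) ^ p)⁻¹ * ((1 - t) ^ p)⁻¹) := by
          apply mul_le_mul_of_nonneg_right hNle (by positivity)
      _ = t / (1 - t) ^ p * ((L : ℝ) * ((L : ℝ) ^ p)⁻¹) := by
          rw [div_eq_mul_inv]; ring
  rw [Real.norm_eq_abs, abs_of_nonneg (Finset.sum_nonneg hpos)]
  exact hsum.trans h2

private lemma ratio_log (t : ℝ) (ht0 : 0 ≤ t) (ht1 : t < 1) (d : ℝ) :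
    Tendsto (fun L : ℕ => Real.log ((L : ℝ) + d)
      - Real.log ((L : ℝ) - (⌊(L : ℝ) * t⌋₊ : ℝ) + d)) atTop (nhds (-Real.log (1 - t))) := by
  have h1t : (0 : ℝ) < 1 - t := by linarith
  have hq : Tendsto (fun L : ℕ => (⌊(L : ℝ) * t⌋₊ : ℝ) / (L : ℝ)) atTop (nhds t) := by
    have h := (tendsto_nat_floor_mul_div_atTop ht0).comp (tendsto_natCast_atTop_atTop (R := ℝ))
    refine h.congr fun L => ?_
    simp only [Function.comp_apply]
    rw [mul_comm]
  have hinv : Tendsto (fun L : ℕ => ((L : ℝ))⁻¹) atTop (nhds 0) :=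
    tendsto_natCast_atTop_atTop.inv_tendsto_atTop
  have hratio : Tendsto (fun L : ℕ => ((L : ℝ) + d) / ((L : ℝ) - (⌊(L : ℝ) * t⌋₊ : ℝ) + d))
      atTop (nhds ((1 - t)⁻¹)) := by
    have hnum : Tendsto (fun L : ℕ => 1 + d * ((L : ℝ))⁻¹) atTop (nhds 1) := by
      have := (tendsto_const_nhds : Tendsto (fun _ : ℕ => (1:ℝ)) atTop (nhds 1)).add (hinv.const_mul d)
      rw [mul_zero, add_zero] at this
      exact this
    have hden : Tendsto (fun L : ℕ => 1 - (⌊(L : ℝ) * t⌋₊ : ℝ) / (L : ℝ) + d * ((L : ℝ))⁻¹)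
        atTop (nhds (1 - t)) := by
      have := ((tendsto_const_nhds : Tendsto (fun _ : ℕ => (1:ℝ)) atTop (nhds 1)).sub hq).add
        (hinv.const_mul d)
      rw [mul_zero, add_zero] at this
      exact this
    have hdiv := hnum.div hden (by linarith)
    rw [show (1 : ℝ) / (1 - t) = (1 - t)⁻¹ by rw [one_div]] at hdiv
    refine hdiv.congr' ?_
    filter_upwards [eventually_ge_atTop 1,
      (sub_floor_atTop t ht0 ht1).eventually_ge_atTop (1 + |d|)] with L hL1 hL2
    have hL0 : (0 : ℝ) < (L : ℝ) := by exact_mod_cast hL1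
    have habs := neg_abs_le d
    have hden1 : (0 : ℝ) < (L : ℝ) - (⌊(L : ℝ) * t⌋₊ : ℝ) + d := by linarith
    have key2 : 1 - (⌊(L : ℝ) * t⌋₊ : ℝ) / (L : ℝ) + d * ((L : ℝ))⁻¹
        = ((L : ℝ) - (⌊(L : ℝ) * t⌋₊ : ℝ) + d) / (L : ℝ) := by
      field_simp
    have key1 : 1 + d * ((L : ℝ))⁻¹ = ((L : ℝ) + d) / (L : ℝ) := by field_simp
    simp only [Pi.div_apply]
    rw [key1, key2]
    rw [div_div_div_cancel_right₀]
    exact ne_of_gt hL0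
  have hlog := (Real.continuousAt_log (by positivity : ((1 - t) : ℝ)⁻¹ ≠ 0)).tendsto.comp hratio
  rw [Real.log_inv] at hlog
  refine hlog.congr' ?_
  filter_upwards [eventually_ge_atTop 1,
    (sub_floor_atTop t ht0 ht1).eventually_ge_atTop (1 + |d|)] with L hL1 hL2
  have hL0 : (0 : ℝ) < (L : ℝ) := by exact_mod_cast hL1
  have habs := neg_abs_le d
  have habs2 := le_abs_self d
  have hLd : (0 : ℝ) < (L : ℝ) + d := by
    have : (L : ℝ) - (⌊(L : ℝ) * t⌋₊ : ℝ) ≤ (L : ℝ) := by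
      have : (0 : ℝ) ≤ (⌊(L : ℝ) * t⌋₊ : ℝ) := Nat.cast_nonneg _
      linarith
    linarith
  have hden1 : (0 : ℝ) < (L : ℝ) - (⌊(L : ℝ) * t⌋₊ : ℝ) + d := by linarith
  simp only [Function.comp_apply]
  rw [Real.log_div (by linarith) (by linarith)]

private lemma harmonic_tendsto (t : ℝ) (ht0 : 0 ≤ t) (ht1 : t < 1) :
    Tendsto (fun L : ℕ => ∑ j ∈ Finset.Icc 1 ⌊(L : ℝ) * t⌋₊, 1 / ((L : ℝ) - (j : ℝ)))
      atTop (nhds (-Real.log (1 - t))) := by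
  refine tendsto_of_tendsto_of_tendsto_of_le_of_le' (ratio_log t ht0 ht1 0) (ratio_log t ht0 ht1 (-1)) ?_ ?_
  · -- lower bound : log(L+0) - log(L-N+0) ≤ S L
    filter_upwards [(sub_floor_atTop t ht0 ht1).eventually_ge_atTop 2] with L hL2
    set N := ⌊(L : ℝ) * t⌋₊ with hNdef
    have tele_low : ∑ j ∈ Finset.Icc 1 N, (Real.log ((L : ℝ) - (j : ℝ) + 1) - Real.log ((L : ℝ) - (j : ℝ)))
        = Real.log ((L : ℝ) - ((0 : ℕ) : ℝ)) - Real.log ((L : ℝ) - (N : ℝ)) := by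
      have h0 := Finset.sum_range_sub' (fun i : ℕ => Real.log ((L : ℝ) - (i : ℝ))) N
      rw [← Finset.Ico_add_one_right_eq_Icc, Finset.sum_Ico_eq_sum_range, Nat.add_one_sub_one]
      calc ∑ i ∈ Finset.range N,
            (Real.log ((L : ℝ) - ((1 + i : ℕ) : ℝ) + 1) - Real.log ((L : ℝ) - ((1 + i : ℕ) : ℝ)))
          = ∑ i ∈ Finset.range N,
            (Real.log ((L : ℝ) - (i : ℝ)) - Real.log ((L : ℝ) - ((i + 1 : ℕ) : ℝ))) := by
            refine Finset.sum_congr rfl fun i _ => ?_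
            have e1 : (L : ℝ) - ((1 + i : ℕ) : ℝ) + 1 = (L : ℝ) - (i : ℝ) := by push_cast; ring
            have e2 : (L : ℝ) - ((1 + i : ℕ) : ℝ) = (L : ℝ) - ((i + 1 : ℕ) : ℝ) := by push_cast; ring
            rw [e1, e2]
        _ = Real.log ((L : ℝ) - ((0 : ℕ) : ℝ)) - Real.log ((L : ℝ) - (N : ℝ)) := h0
    have hineq : ∀ j ∈ Finset.Icc 1 N,
        Real.log ((L : ℝ) - (j : ℝ) + 1) - Real.log ((L : ℝ) - (j : ℝ)) ≤ 1 / ((L : ℝ) - (j : ℝ)) := by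
      intro j hj
      simp only [Finset.mem_Icc] at hj
      have hj2 : ((j : ℝ)) ≤ (N : ℝ) := Nat.cast_le.2 hj.2
      set y := (L : ℝ) - (j : ℝ) with hy
      have hy2 : (2 : ℝ) ≤ y := by simp only [hy]; linarith
      have hy0 : (0 : ℝ) < y := by linarith
      have h := Real.log_le_sub_one_of_pos (show (0 : ℝ) < (y + 1) / y by positivity)
      rw [Real.log_div (by linarith) (by linarith)] at h
      have he : (y + 1) / y - 1 = 1 / y := by field_simp; ring
      linarith
    calc Real.log ((L : ℝ) + 0) - Real.log ((L : ℝ) - (N : ℝ) + 0)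
        = Real.log ((L : ℝ) - ((0 : ℕ) : ℝ)) - Real.log ((L : ℝ) - (N : ℝ)) := by norm_num
      _ = ∑ j ∈ Finset.Icc 1 N, (Real.log ((L : ℝ) - (j : ℝ) + 1) - Real.log ((L : ℝ) - (j : ℝ))) :=
          tele_low.symm
      _ ≤ ∑ j ∈ Finset.Icc 1 N, 1 / ((L : ℝ) - (j : ℝ)) := Finset.sum_le_sum hineq
  · -- upper bound : S L ≤ log(L-1) - log(L-N-1)
    filter_upwards [(sub_floor_atTop t ht0 ht1).eventually_ge_atTop 2] with L hL2
    set N := ⌊(L : ℝ) * t⌋₊ with hNdef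
    have tele_up : ∑ j ∈ Finset.Icc 1 N, (Real.log ((L : ℝ) - (j : ℝ)) - Real.log ((L : ℝ) - (j : ℝ) - 1))
        = Real.log ((L : ℝ) - ((0 : ℕ) : ℝ) - 1) - Real.log ((L : ℝ) - (N : ℝ) - 1) := by
      have h0 := Finset.sum_range_sub' (fun i : ℕ => Real.log ((L : ℝ) - (i : ℝ) - 1)) N
      rw [← Finset.Ico_add_one_right_eq_Icc, Finset.sum_Ico_eq_sum_range, Nat.add_one_sub_one]
      calc ∑ i ∈ Finset.range N,
            (Real.log ((L : ℝ) - ((1 + i : ℕ) : ℝ)) - Real.log ((L : ℝ) - ((1 + i : ℕ) : ℝ) - 1))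
          = ∑ i ∈ Finset.range N,
            (Real.log ((L : ℝ) - (i : ℝ) - 1) - Real.log ((L : ℝ) - ((i + 1 : ℕ) : ℝ) - 1)) := by
            refine Finset.sum_congr rfl fun i _ => ?_
            have e1 : (L : ℝ) - ((1 + i : ℕ) : ℝ) = (L : ℝ) - (i : ℝ) - 1 := by push_cast; ring
            have e2 : (L : ℝ) - ((1 + i : ℕ) : ℝ) - 1 = (L : ℝ) - ((i + 1 : ℕ) : ℝ) - 1 := by
              push_cast; ring
            rw [e2, e1]
        _ = Real.log ((L : ℝ) - ((0 : ℕ) : ℝ) - 1) - Real.log ((L : ℝ) - (N : ℝ) - 1) := h0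
    have hineq : ∀ j ∈ Finset.Icc 1 N,
        1 / ((L : ℝ) - (j : ℝ)) ≤ Real.log ((L : ℝ) - (j : ℝ)) - Real.log ((L : ℝ) - (j : ℝ) - 1) := by
      intro j hj
      simp only [Finset.mem_Icc] at hj
      have hj2 : ((j : ℝ)) ≤ (N : ℝ) := Nat.cast_le.2 hj.2
      set y := (L : ℝ) - (j : ℝ) with hy
      have hy2 : (2 : ℝ) ≤ y := by simp only [hy]; linarith
      have hy0 : (0 : ℝ) < y := by linarith
      have h := Real.log_le_sub_one_of_pos
        (show (0 : ℝ) < (y - 1) / y from div_pos (by linarith) hy0)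
      rw [Real.log_div (by linarith) (by linarith)] at h
      have he : (y - 1) / y - 1 = -(1 / y) := by field_simp; ring
      linarith
    calc ∑ j ∈ Finset.Icc 1 N, 1 / ((L : ℝ) - (j : ℝ))
        ≤ ∑ j ∈ Finset.Icc 1 N, (Real.log ((L : ℝ) - (j : ℝ)) - Real.log ((L : ℝ) - (j : ℝ) - 1)) :=
          Finset.sum_le_sum hineq
      _ = Real.log ((L : ℝ) - ((0 : ℕ) : ℝ) - 1) - Real.log ((L : ℝ) - (N : ℝ) - 1) := tele_up
      _ = Real.log ((L : ℝ) + (-1)) - Real.log ((L : ℝ) - (N : ℝ) + (-1)) := by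
          have e1 : (L : ℝ) - ((0 : ℕ) : ℝ) - 1 = (L : ℝ) + (-1) := by push_cast; ring
          have e2 : (L : ℝ) - (N : ℝ) - 1 = (L : ℝ) - (N : ℝ) + (-1) := by ring
          rw [e1, e2]

private lemma sin_pow_four_eq (θ : ℝ) :
    Real.sin θ ^ 4 = 3 / 8 - 1 / 2 * Real.cos (2 * θ) + 1 / 8 * Real.cos (4 * θ) := by
  have h := Real.sin_sq_add_cos_sq θ
  rw [show (4 : ℝ) * θ = 2 * (2 * θ) by ring, Real.cos_two_mul (2 * θ), Real.cos_two_mul θ]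
  linear_combination (Real.sin θ ^ 2 - Real.cos θ ^ 2 + 1) * h

private lemma cos_pow_four_eq (θ : ℝ) :
    Real.cos θ ^ 4 = 3 / 8 + 1 / 2 * Real.cos (2 * θ) + 1 / 8 * Real.cos (4 * θ) := by
  rw [show (4 : ℝ) * θ = 2 * (2 * θ) by ring, Real.cos_two_mul (2 * θ), Real.cos_two_mul θ]
  ring

private lemma sin_sq_cos_sq_eq (θ : ℝ) :
    Real.sin θ ^ 2 * Real.cos θ ^ 2 = 1 / 8 - 1 / 8 * Real.cos (4 * θ) := by
  have h := Real.sin_sq_add_cos_sq θ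
  rw [show (4 : ℝ) * θ = 2 * (2 * θ) by ring, Real.cos_two_mul (2 * θ), Real.cos_two_mul θ]
  linear_combination (Real.cos θ ^ 2) * h

private lemma cos_cube_sin_eq (θ : ℝ) :
    Real.cos θ ^ 3 * Real.sin θ = 1 / 4 * Real.sin (2 * θ) + 1 / 8 * Real.sin (4 * θ) := by
  rw [show (4 : ℝ) * θ = 2 * (2 * θ) by ring, Real.sin_two_mul (2 * θ), Real.sin_two_mul θ,
    Real.cos_two_mul θ]
  ring

end Helpers

/-- for `k ∈ (−π, −π/2)`, `k ≠ −3π/4`, `ηⱼ = (2j−1)k`, all `x ∈ ℝ` and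
`t ∈ [0,1)`: if `α > 1/2` the sums `Σ_{j=1}^{⌊Lt⌋} sin⁴(x−ηⱼ)/(L−j)^{2α}`,
`Σ cos⁴(x−ηⱼ)/(L−j)^{2α}` and `Σ sin²(x−ηⱼ)cos²(x−ηⱼ)/(L−j)^{2α}` tend to `0`; if
`α = 1/2` they tend to `−(3/8)log(1−t)`, `−(3/8)log(1−t)` and `−(1/8)log(1−t)`
respectively; and for all `α ≥ 1/2`, `Σ cos³(x−ηⱼ)sin(x−ηⱼ)/(L−j)^{2α} → 0`. -/
theorem trig_sums_decaying_fourth_order (k : ℝ) (hk1 : -π < k) (hk2 : k < -(π / 2))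
    (hk3 : k ≠ -(3 * π / 4)) (x t : ℝ) (ht0 : 0 ≤ t) (ht1 : t < 1) :
    (∀ α : ℝ, 1 / 2 < α →
      Tendsto (fun L : ℕ => ∑ j ∈ Finset.Icc 1 ⌊(L : ℝ) * t⌋₊,
          Real.sin (x - (2 * (j : ℝ) - 1) * k) ^ 4 / ((L : ℝ) - (j : ℝ)) ^ (2 * α))
        atTop (nhds 0) ∧
      Tendsto (fun L : ℕ => ∑ j ∈ Finset.Icc 1 ⌊(L : ℝ) * t⌋₊,
          Real.cos (x - (2 * (j : ℝ) - 1) * k) ^ 4 / ((L : ℝ) - (j : ℝ)) ^ (2 * α))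
        atTop (nhds 0) ∧
      Tendsto (fun L : ℕ => ∑ j ∈ Finset.Icc 1 ⌊(L : ℝ) * t⌋₊,
          Real.sin (x - (2 * (j : ℝ) - 1) * k) ^ 2 *
            Real.cos (x - (2 * (j : ℝ) - 1) * k) ^ 2 / ((L : ℝ) - (j : ℝ)) ^ (2 * α))
        atTop (nhds 0)) ∧
    (Tendsto (fun L : ℕ => ∑ j ∈ Finset.Icc 1 ⌊(L : ℝ) * t⌋₊,
        Real.sin (x - (2 * (j : ℝ) - 1) * k) ^ 4 / ((L : ℝ) - (j : ℝ)))
      atTop (nhds (-(3 / 8) * Real.log (1 - t))) ∧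
    Tendsto (fun L : ℕ => ∑ j ∈ Finset.Icc 1 ⌊(L : ℝ) * t⌋₊,
        Real.cos (x - (2 * (j : ℝ) - 1) * k) ^ 4 / ((L : ℝ) - (j : ℝ)))
      atTop (nhds (-(3 / 8) * Real.log (1 - t))) ∧
    Tendsto (fun L : ℕ => ∑ j ∈ Finset.Icc 1 ⌊(L : ℝ) * t⌋₊,
        Real.sin (x - (2 * (j : ℝ) - 1) * k) ^ 2 *
          Real.cos (x - (2 * (j : ℝ) - 1) * k) ^ 2 / ((L : ℝ) - (j : ℝ)))
      atTop (nhds (-(1 / 8) * Real.log (1 - t)))) ∧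
    (∀ α : ℝ, 1 / 2 ≤ α →
      Tendsto (fun L : ℕ => ∑ j ∈ Finset.Icc 1 ⌊(L : ℝ) * t⌋₊,
          Real.cos (x - (2 * (j : ℝ) - 1) * k) ^ 3 *
            Real.sin (x - (2 * (j : ℝ) - 1) * k) / ((L : ℝ) - (j : ℝ)) ^ (2 * α))
        atTop (nhds 0)) := by
  have hpi := Real.pi_pos
  -- non-degeneracy of the frequencies 4k and 8k
  have hb1 : ∀ n : ℤ, 4 * k ≠ n * (2 * π) := by
    intro n h
    have h1 : (-2 : ℝ) < (n : ℝ) := by nlinarith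
    have h2 : ((n : ℝ)) < -1 := by nlinarith
    have h1' : (-2 : ℤ) < n := by exact_mod_cast h1
    have h2' : n < -1 := by exact_mod_cast h2
    omega
  have hb2 : ∀ n : ℤ, 8 * k ≠ n * (2 * π) := by
    intro n h
    have h1 : (-4 : ℝ) < (n : ℝ) := by nlinarith
    have h2 : ((n : ℝ)) < -2 := by nlinarith
    have h1' : (-4 : ℤ) < n := by exact_mod_cast h1
    have h2' : n < -2 := by exact_mod_cast h2
    have hn3 : n = -3 := by omega
    subst hn3
    apply hk3
    push_cast at h
    linarith
  obtain ⟨M1, hM10, hM1c, hM1s⟩ := trig_partial_bound (2 * x + 2 * k) (4 * k) hb1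
  obtain ⟨M2, hM20, hM2c, hM2s⟩ := trig_partial_bound (4 * x + 4 * k) (8 * k) hb2
  -- oscillatory building blocks
  have hC1 : ∀ p : ℝ, 0 < p → Tendsto (fun L : ℕ => ∑ j ∈ Finset.Icc 1 ⌊(L : ℝ) * t⌋₊,
      Real.cos (2 * x + 2 * k - 4 * k * (j : ℝ)) / ((L : ℝ) - (j : ℝ)) ^ p) atTop (nhds 0) :=
    fun p hp => osc_tendsto _ M1 hM1c p hp t ht0 ht1
  have hS1 : ∀ p : ℝ, 0 < p → Tendsto (fun L : ℕ => ∑ j ∈ Finset.Icc 1 ⌊(L : ℝ) * t⌋₊,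
      Real.sin (2 * x + 2 * k - 4 * k * (j : ℝ)) / ((L : ℝ) - (j : ℝ)) ^ p) atTop (nhds 0) :=
    fun p hp => osc_tendsto _ M1 hM1s p hp t ht0 ht1
  have hC2 : ∀ p : ℝ, 0 < p → Tendsto (fun L : ℕ => ∑ j ∈ Finset.Icc 1 ⌊(L : ℝ) * t⌋₊,
      Real.cos (4 * x + 4 * k - 8 * k * (j : ℝ)) / ((L : ℝ) - (j : ℝ)) ^ p) atTop (nhds 0) :=
    fun p hp => osc_tendsto _ M2 hM2c p hp t ht0 ht1
  have hS2 : ∀ p : ℝ, 0 < p → Tendsto (fun L : ℕ => ∑ j ∈ Finset.Icc 1 ⌊(L : ℝ) * t⌋₊,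
      Real.sin (4 * x + 4 * k - 8 * k * (j : ℝ)) / ((L : ℝ) - (j : ℝ)) ^ p) atTop (nhds 0) :=
    fun p hp => osc_tendsto _ M2 hM2s p hp t ht0 ht1
  refine ⟨fun α hα => ?_, ⟨?_, ?_, ?_⟩, fun α hα => ?_⟩
  · -- α > 1/2 : all three power sums tend to 0
    have hp1 : (1 : ℝ) < 2 * α := by linarith
    have hp0 : (0 : ℝ) < 2 * α := by linarith
    have hP := pow_sum_tendsto (2 * α) hp1 t ht0 ht1
    refine ⟨?_, ?_, ?_⟩
    · have key := ((hP.const_mul (3 / 8 : ℝ)).add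
        (((hC1 (2 * α) hp0).const_mul (-(1 / 2) : ℝ)).add ((hC2 (2 * α) hp0).const_mul (1 / 8 : ℝ))))
      simp only [mul_zero, add_zero] at key
      refine key.congr fun L => ?_
      rw [Finset.mul_sum, Finset.mul_sum, Finset.mul_sum, ← Finset.sum_add_distrib,
        ← Finset.sum_add_distrib]
      refine Finset.sum_congr rfl fun j _ => ?_
      have e1 : Real.cos (2 * x + 2 * k - 4 * k * (j : ℝ))
          = Real.cos (2 * (x - (2 * (j : ℝ) - 1) * k)) := by congr 1; ring
      have e2 : Real.cos (4 * x + 4 * k - 8 * k * (j : ℝ))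
          = Real.cos (4 * (x - (2 * (j : ℝ) - 1) * k)) := by congr 1; ring
      rw [e1, e2, sin_pow_four_eq (x - (2 * (j : ℝ) - 1) * k)]
      ring
    · have key := ((hP.const_mul (3 / 8 : ℝ)).add
        (((hC1 (2 * α) hp0).const_mul ((1 / 2) : ℝ)).add ((hC2 (2 * α) hp0).const_mul (1 / 8 : ℝ))))
      simp only [mul_zero, add_zero] at key
      refine key.congr fun L => ?_
      rw [Finset.mul_sum, Finset.mul_sum, Finset.mul_sum, ← Finset.sum_add_distrib,
        ← Finset.sum_add_distrib]
      refine Finset.sum_congr rfl fun j _ => ?_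
      have e1 : Real.cos (2 * x + 2 * k - 4 * k * (j : ℝ))
          = Real.cos (2 * (x - (2 * (j : ℝ) - 1) * k)) := by congr 1; ring
      have e2 : Real.cos (4 * x + 4 * k - 8 * k * (j : ℝ))
          = Real.cos (4 * (x - (2 * (j : ℝ) - 1) * k)) := by congr 1; ring
      rw [e1, e2, cos_pow_four_eq (x - (2 * (j : ℝ) - 1) * k)]
      ring
    · have key := ((hP.const_mul (1 / 8 : ℝ)).add
        ((hC2 (2 * α) hp0).const_mul (-(1 / 8) : ℝ)))
      simp only [mul_zero, add_zero] at key
      refine key.congr fun L => ?_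
      rw [Finset.mul_sum, Finset.mul_sum, ← Finset.sum_add_distrib]
      refine Finset.sum_congr rfl fun j _ => ?_
      have e2 : Real.cos (4 * x + 4 * k - 8 * k * (j : ℝ))
          = Real.cos (4 * (x - (2 * (j : ℝ) - 1) * k)) := by congr 1; ring
      rw [e2, sin_sq_cos_sq_eq (x - (2 * (j : ℝ) - 1) * k)]
      ring
  · -- α = 1/2 : sin⁴
    have hH := harmonic_tendsto t ht0 ht1
    have key := ((hH.const_mul (3 / 8 : ℝ)).add
      (((hC1 1 one_pos).const_mul (-(1 / 2) : ℝ)).add ((hC2 1 one_pos).const_mul (1 / 8 : ℝ))))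
    simp only [mul_zero, add_zero] at key
    have hval : (3 / 8 : ℝ) * -Real.log (1 - t) = -(3 / 8) * Real.log (1 - t) := by ring
    rw [hval] at key
    refine key.congr fun L => ?_
    rw [Finset.mul_sum, Finset.mul_sum, Finset.mul_sum, ← Finset.sum_add_distrib,
      ← Finset.sum_add_distrib]
    refine Finset.sum_congr rfl fun j _ => ?_
    have e1 : Real.cos (2 * x + 2 * k - 4 * k * (j : ℝ))
        = Real.cos (2 * (x - (2 * (j : ℝ) - 1) * k)) := by congr 1; ring
    have e2 : Real.cos (4 * x + 4 * k - 8 * k * (j : ℝ))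
        = Real.cos (4 * (x - (2 * (j : ℝ) - 1) * k)) := by congr 1; ring
    rw [Real.rpow_one, e1, e2, sin_pow_four_eq (x - (2 * (j : ℝ) - 1) * k)]
    ring
  · -- α = 1/2 : cos⁴
    have hH := harmonic_tendsto t ht0 ht1
    have key := ((hH.const_mul (3 / 8 : ℝ)).add
      (((hC1 1 one_pos).const_mul ((1 / 2) : ℝ)).add ((hC2 1 one_pos).const_mul (1 / 8 : ℝ))))
    simp only [mul_zero, add_zero] at key
    have hval : (3 / 8 : ℝ) * -Real.log (1 - t) = -(3 / 8) * Real.log (1 - t) := by ring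
    rw [hval] at key
    refine key.congr fun L => ?_
    rw [Finset.mul_sum, Finset.mul_sum, Finset.mul_sum, ← Finset.sum_add_distrib,
      ← Finset.sum_add_distrib]
    refine Finset.sum_congr rfl fun j _ => ?_
    have e1 : Real.cos (2 * x + 2 * k - 4 * k * (j : ℝ))
        = Real.cos (2 * (x - (2 * (j : ℝ) - 1) * k)) := by congr 1; ring
    have e2 : Real.cos (4 * x + 4 * k - 8 * k * (j : ℝ))
        = Real.cos (4 * (x - (2 * (j : ℝ) - 1) * k)) := by congr 1; ring
    rw [Real.rpow_one, e1, e2, cos_pow_four_eq (x - (2 * (j : ℝ) - 1) * k)]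
    ring
  · -- α = 1/2 : sin²cos²
    have hH := harmonic_tendsto t ht0 ht1
    have key := ((hH.const_mul (1 / 8 : ℝ)).add ((hC2 1 one_pos).const_mul (-(1 / 8) : ℝ)))
    simp only [mul_zero, add_zero] at key
    have hval : (1 / 8 : ℝ) * -Real.log (1 - t) = -(1 / 8) * Real.log (1 - t) := by ring
    rw [hval] at key
    refine key.congr fun L => ?_
    rw [Finset.mul_sum, Finset.mul_sum, ← Finset.sum_add_distrib]
    refine Finset.sum_congr rfl fun j _ => ?_
    have e2 : Real.cos (4 * x + 4 * k - 8 * k * (j : ℝ))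
        = Real.cos (4 * (x - (2 * (j : ℝ) - 1) * k)) := by congr 1; ring
    rw [Real.rpow_one, e2, sin_sq_cos_sq_eq (x - (2 * (j : ℝ) - 1) * k)]
    ring
  · -- α ≥ 1/2 : cos³ sin
    have hp0 : (0 : ℝ) < 2 * α := by linarith
    have key := (((hS1 (2 * α) hp0).const_mul (1 / 4 : ℝ)).add
      ((hS2 (2 * α) hp0).const_mul (1 / 8 : ℝ)))
    simp only [mul_zero, add_zero] at key
    refine key.congr fun L => ?_
    rw [Finset.mul_sum, Finset.mul_sum, ← Finset.sum_add_distrib]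
    refine Finset.sum_congr rfl fun j _ => ?_
    have e1 : Real.sin (2 * x + 2 * k - 4 * k * (j : ℝ))
        = Real.sin (2 * (x - (2 * (j : ℝ) - 1) * k)) := by congr 1; ring
    have e2 : Real.sin (4 * x + 4 * k - 8 * k * (j : ℝ))
        = Real.sin (4 * (x - (2 * (j : ℝ) - 1) * k)) := by congr 1; ring
    rw [e1, e2, cos_cube_sin_eq (x - (2 * (j : ℝ) - 1) * k)]
    ring
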